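/- Let O be a discrete valuation ring with uniformizer π whose residue field is finite with q elements, let m ≥ 1 and d ≥ 1. The quotient ring homomorphism O/π^{m+1}O → O/π^m O sends unimodular vectors to unimodular vectors and is compatible with unit scaling, hence induces a map ρ_m : P^d(O/π^{m+1}O) → P^d(O/π^m O) on orbit sets. The map ρ_m is surjective, and every fiber of ρ_m has exactly q^d elements. -/

import Mathlib

open IsLocalRing

/-- A vector over a commutative ring is unimodular if its coordinates generate the
unit ideal. -/
def Unimodular {R : Type*} [CommRing R] {n : ℕ} (v : Fin n → R) : Prop :=
  Ideal.span (Set.range v) = ⊤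

/-- The scaling action of `Rˣ` on unimodular vectors, as an equivalence relation. -/
def unimodSetoid (R : Type*) [CommRing R] (n : ℕ) :
    Setoid {v : Fin n → R // Unimodular v} where
  r v w := ∃ u : Rˣ, ∀ i, (u : R) * v.1 i = w.1 i
  iseqv := by
    constructor
    · exact fun v => ⟨1, fun i => one_mul _⟩
    · rintro v w ⟨u, hu⟩
      exact ⟨u⁻¹, fun i => by rw [← hu i, ← mul_assoc, Units.inv_mul, one_mul]⟩
    · rintro a b c ⟨u, hu⟩ ⟨t, ht⟩
      exact ⟨t * u, fun i => by rw [Units.val_mul, mul_assoc, hu i, ht i]⟩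

/-- `P^(n-1)(R)`: the set of orbits of the scaling action of `Rˣ` on the unimodular
vectors in `Rⁿ`. -/
def ProjSet (R : Type*) [CommRing R] (n : ℕ) := Quotient (unimodSetoid R n)

/-- In a local ring, the image of `a` in `O ⧸ (π^k)` (with `π` irreducible, `k ≥ 1`)
is a unit iff `a` is a unit. -/
lemma aux_isUnit_mk {O : Type*} [CommRing O] [IsLocalRing O]
    {π : O} (hπ : Irreducible π) {k : ℕ} (hk : 1 ≤ k) (a : O) :
    IsUnit (Ideal.Quotient.mk (Ideal.span {π ^ k}) a) ↔ IsUnit a := by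
  constructor
  · intro h
    obtain ⟨c, hc⟩ := isUnit_iff_exists_inv.mp h
    obtain ⟨b, rfl⟩ := Ideal.Quotient.mk_surjective c
    rw [← map_mul, ← map_one (Ideal.Quotient.mk (Ideal.span {π ^ k})),
      Ideal.Quotient.eq] at hc
    obtain ⟨r, hr⟩ := Ideal.mem_span_singleton.mp hc
    have hone : (1 : O) = a * b - π ^ k * r := by rw [← hr]; ring
    have hab : IsUnit (a * b) := by
      by_contra hnu
      have h1 : a * b ∈ maximalIdeal O := hnu
      have h2 : π ^ k * r ∈ maximalIdeal O := by
        obtain ⟨s, hs⟩ : π ∣ π ^ k := dvd_pow_self π (by omega)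
        rw [hs, mul_assoc]
        exact Ideal.mul_mem_right _ _ hπ.not_isUnit
      have : (1 : O) ∈ maximalIdeal O := hone ▸ sub_mem h1 h2
      exact (Ideal.ne_top_iff_one _).mp (maximalIdeal.isMaximal O).ne_top this
    exact isUnit_of_mul_isUnit_left hab
  · intro h
    exact h.map _

/-- Over a local ring, a vector is unimodular iff one of its coordinates is a unit. -/
lemma aux_unimod {R : Type*} [CommRing R] [IsLocalRing R] {n : ℕ} (v : Fin n → R) :
    Unimodular v ↔ ∃ i, IsUnit (v i) := by
  constructor
  · intro h
    by_contra hn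
    push_neg at hn
    have hle : Ideal.span (Set.range v) ≤ maximalIdeal R :=
      Ideal.span_le.mpr (by rintro x ⟨i, rfl⟩; exact hn i)
    rw [h] at hle
    exact (maximalIdeal.isMaximal R).ne_top (top_le_iff.mp hle)
  · rintro ⟨i, hi⟩
    exact Ideal.eq_top_of_isUnit_mem _ (Ideal.subset_span ⟨i, rfl⟩) hi

/-- Let `O` be a DVR with uniformizer `π` and finite residue field with `q` elements,
and let `m, d ≥ 1`.  The quotient homomorphism `φ : O/π^(m+1)O → O/π^m O` sends
unimodular vectors to unimodular vectors and is compatible with unit scaling, hence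
induces a map `ρ : P^d(O/π^(m+1)O) → P^d(O/π^m O)`; moreover `ρ` is surjective and
each of its fibers has exactly `q^d` elements. -/
theorem stmt11 (O : Type*) [CommRing O] [IsDomain O] [IsDiscreteValuationRing O]
    (π : O) (hπ : Irreducible π)
    [Finite (IsLocalRing.ResidueField O)] (q : ℕ)
    (hq : Nat.card (IsLocalRing.ResidueField O) = q)
    (m d : ℕ) (hm : 1 ≤ m) (hd : 1 ≤ d)
    (φ : (O ⧸ Ideal.span {π ^ (m + 1)}) →+* (O ⧸ Ideal.span {π ^ m}))
    (hφ : ∀ a : O, φ (Ideal.Quotient.mk (Ideal.span {π ^ (m + 1)}) a) =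
      Ideal.Quotient.mk (Ideal.span {π ^ m}) a) :
    (∀ v : Fin (d + 1) → O ⧸ Ideal.span {π ^ (m + 1)},
      Unimodular v → Unimodular fun i => φ (v i)) ∧
    ∃ ρ : ProjSet (O ⧸ Ideal.span {π ^ (m + 1)}) (d + 1) →
        ProjSet (O ⧸ Ideal.span {π ^ m}) (d + 1),
      (∀ (v : Fin (d + 1) → O ⧸ Ideal.span {π ^ (m + 1)}) (hv : Unimodular v)
          (hv' : Unimodular fun i => φ (v i)),
          ρ (Quotient.mk (unimodSetoid _ _) ⟨v, hv⟩) =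
            Quotient.mk (unimodSetoid _ _) ⟨fun i => φ (v i), hv'⟩) ∧
      Function.Surjective ρ ∧
      ∀ x, Nat.card {y // ρ y = x} = q ^ d := by
  have hne1 : Ideal.span {π ^ (m + 1)} ≠ (⊤ : Ideal O) := by
    rw [Ne, Ideal.span_singleton_eq_top]
    exact fun h => hπ.not_isUnit ((isUnit_pow_iff (by omega)).mp h)
  have hne0 : Ideal.span {π ^ m} ≠ (⊤ : Ideal O) := by
    rw [Ne, Ideal.span_singleton_eq_top]
    exact fun h => hπ.not_isUnit ((isUnit_pow_iff (by omega)).mp h)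
  haveI := Ideal.Quotient.nontrivial_iff.mpr hne1
  haveI := Ideal.Quotient.nontrivial_iff.mpr hne0
  haveI : IsLocalRing (O ⧸ Ideal.span {π ^ (m + 1)}) :=
    IsLocalRing.of_surjective' (Ideal.Quotient.mk (Ideal.span {π ^ (m + 1)})) Ideal.Quotient.mk_surjective
  haveI : IsLocalRing (O ⧸ Ideal.span {π ^ m}) :=
    IsLocalRing.of_surjective' (Ideal.Quotient.mk (Ideal.span {π ^ m})) Ideal.Quotient.mk_surjective
  have part1 : ∀ v : Fin (d + 1) → O ⧸ Ideal.span {π ^ (m + 1)},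
      Unimodular v → Unimodular fun i => φ (v i) := by
    intro v hv
    rw [aux_unimod] at hv ⊢
    obtain ⟨i, hi⟩ := hv
    exact ⟨i, hi.map φ⟩
  refine ⟨part1, ?_⟩
  set F : {v : Fin (d + 1) → O ⧸ Ideal.span {π ^ (m + 1)} // Unimodular v} →
      {w : Fin (d + 1) → O ⧸ Ideal.span {π ^ m} // Unimodular w} :=
    fun v => ⟨fun i => φ (v.1 i), part1 v.1 v.2⟩ with hF
  have hFcomp : ∀ v w : {v : Fin (d + 1) → O ⧸ Ideal.span {π ^ (m + 1)} // Unimodular v},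
      (unimodSetoid (O ⧸ Ideal.span {π ^ (m + 1)}) (d + 1)).r v w →
      (unimodSetoid (O ⧸ Ideal.span {π ^ m}) (d + 1)).r (F v) (F w) := by
    rintro v w ⟨u, hu⟩
    refine ⟨Units.map (φ : (O ⧸ Ideal.span {π ^ (m + 1)}) →* (O ⧸ Ideal.span {π ^ m})) u, fun i => ?_⟩
    show φ u * φ (v.1 i) = φ (w.1 i)
    rw [← map_mul, hu i]
  set ρ : ProjSet (O ⧸ Ideal.span {π ^ (m + 1)}) (d + 1) → ProjSet (O ⧸ Ideal.span {π ^ m}) (d + 1) :=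
    Quotient.map F hFcomp with hρ
  have hρmk : ∀ v : {v : Fin (d + 1) → O ⧸ Ideal.span {π ^ (m + 1)} // Unimodular v},
      ρ (Quotient.mk _ v) = Quotient.mk _ (F v) := fun v => rfl
  refine ⟨ρ, fun v hv hv' => hρmk ⟨v, hv⟩, ?_, ?_⟩
  · -- surjectivity
    intro x
    obtain ⟨⟨w, hw⟩, rfl⟩ := Quotient.exists_rep x
    choose a ha using fun i => Ideal.Quotient.mk_surjective (I := Ideal.span {π ^ m}) (w i)
    set v : Fin (d + 1) → O ⧸ Ideal.span {π ^ (m + 1)} := fun i => Ideal.Quotient.mk (Ideal.span {π ^ (m + 1)}) (a i) with hv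
    have hvu : Unimodular v := by
      rw [aux_unimod]
      obtain ⟨i, hi⟩ := (aux_unimod w).mp hw
      rw [← ha i] at hi
      exact ⟨i, (aux_isUnit_mk hπ (by omega) (a i)).mpr
        ((aux_isUnit_mk hπ hm (a i)).mp hi)⟩
    refine ⟨Quotient.mk _ ⟨v, hvu⟩, ?_⟩
    rw [hρmk]
    congr 1
    refine Subtype.ext (funext fun i => ?_)
    show φ (Ideal.Quotient.mk (Ideal.span {π ^ (m + 1)}) (a i)) = w i
    rw [hφ, ha]
  · -- fiber count
    intro x
    obtain ⟨⟨w₀, hw₀⟩, rfl⟩ := Quotient.exists_rep x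
    obtain ⟨i₀, hi₀⟩ := (aux_unimod w₀).mp hw₀
    set u₀ : (O ⧸ Ideal.span {π ^ m})ˣ := hi₀.unit with hu₀
    set w : Fin (d + 1) → O ⧸ Ideal.span {π ^ m} := fun i => (↑u₀⁻¹ : O ⧸ Ideal.span {π ^ m}) * w₀ i with hwdef
    have hone : w i₀ = 1 := by
      show (↑u₀⁻¹ : O ⧸ Ideal.span {π ^ m}) * w₀ i₀ = 1
      rw [← hi₀.unit_spec, ← hu₀, Units.inv_mul]
    have hwu : Unimodular w := (aux_unimod w).mpr ⟨i₀, hone ▸ isUnit_one⟩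
    have hxw : Quotient.mk (unimodSetoid (O ⧸ Ideal.span {π ^ m}) (d + 1)) ⟨w₀, hw₀⟩ =
        Quotient.mk (unimodSetoid (O ⧸ Ideal.span {π ^ m}) (d + 1)) ⟨w, hwu⟩ :=
      Quotient.sound ⟨u₀⁻¹, fun i => rfl⟩
    rw [hxw]
    -- each fiber of `φ` has exactly `q` elements
    have hπm : (π : O) ^ m ≠ 0 := pow_ne_zero m hπ.ne_zero
    have hkercard : ∀ y : O ⧸ Ideal.span {π ^ m}, Nat.card {z : O ⧸ Ideal.span {π ^ (m + 1)} // φ z = y} = q := by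
      intro y
      obtain ⟨a0, ha0⟩ := Ideal.Quotient.mk_surjective (I := Ideal.span {π ^ m}) y
      set z₀ : O ⧸ Ideal.span {π ^ (m + 1)} := Ideal.Quotient.mk (Ideal.span {π ^ (m + 1)}) a0 with hz₀def
      have hz₀ : φ z₀ = y := by rw [hz₀def, hφ, ha0]
      have e0 : {z : O ⧸ Ideal.span {π ^ (m + 1)} // φ z = y} ≃ {z : O ⧸ Ideal.span {π ^ (m + 1)} // φ z = 0} :=
        { toFun := fun z => ⟨z.1 - z₀, by rw [map_sub, z.2, hz₀, sub_self]⟩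
          invFun := fun z => ⟨z.1 + z₀, by rw [map_add, z.2, hz₀, zero_add]⟩
          left_inv := fun z => by simp
          right_inv := fun z => by simp }
      rw [Nat.card_congr e0]
      -- the kernel fiber is the range of multiplication by `π ^ m` into `O ⧸ Ideal.span {π ^ (m + 1)}`
      set M : O →ₗ[O] O ⧸ Ideal.span {π ^ (m + 1)} :=
        (Submodule.mkQ (Ideal.span {π ^ (m + 1)})) ∘ₗ LinearMap.toSpanSingleton O O (π ^ m) with hM
      have hMapply : ∀ c : O, M c = Ideal.Quotient.mk (Ideal.span {π ^ (m + 1)}) (c * π ^ m) := by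
        intro c; rfl
      have hker : LinearMap.ker M = Ideal.span {π} := by
        ext c
        rw [LinearMap.mem_ker, hMapply, Ideal.Quotient.eq_zero_iff_mem, Ideal.mem_span_singleton, Ideal.mem_span_singleton]
        constructor
        · rintro ⟨r, hr⟩
          refine ⟨r, ?_⟩
          have h' : c * π ^ m = (π * r) * π ^ m := by
            rw [hr, pow_succ]; ring
          exact mul_right_cancel₀ hπm h'
        · rintro ⟨r, rfl⟩
          exact ⟨r, by rw [pow_succ]; ring⟩
      have hrange : ∀ z : O ⧸ Ideal.span {π ^ (m + 1)}, φ z = 0 ↔ z ∈ LinearMap.range M := by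
        intro z
        obtain ⟨b, rfl⟩ := Ideal.Quotient.mk_surjective (I := Ideal.span {π ^ (m + 1)}) z
        rw [hφ, Ideal.Quotient.eq_zero_iff_mem, Ideal.mem_span_singleton]
        constructor
        · rintro ⟨c, rfl⟩
          exact LinearMap.mem_range.mpr ⟨c, by rw [hMapply, mul_comm]⟩
        · intro hz
          obtain ⟨c, hc⟩ := LinearMap.mem_range.mp hz
          rw [hMapply] at hc
          have : b - c * π ^ m ∈ Ideal.span {π ^ (m + 1)} := (Ideal.Quotient.eq (I := Ideal.span {π ^ (m + 1)})).mp hc.symm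
          rw [Ideal.mem_span_singleton] at this
          obtain ⟨r, hr⟩ := this
          have : b = π ^ m * (c + π * r) := by
            have : b = c * π ^ m + π ^ (m + 1) * r := by rw [← hr]; ring
            rw [this, pow_succ]; ring
          exact ⟨c + π * r, this⟩
      have e1 : {z : O ⧸ Ideal.span {π ^ (m + 1)} // φ z = 0} ≃ LinearMap.range M :=
        Equiv.subtypeEquivRight hrange
      rw [Nat.card_congr e1,
        Nat.card_congr (LinearMap.quotKerEquivRange M).toEquiv.symm, hker,
        ← hπ.maximalIdeal_eq]
      exact hq
    -- normalized representatives of the fiber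
    have hSuni : ∀ v : {v : Fin (d + 1) → O ⧸ Ideal.span {π ^ (m + 1)} //
        (∀ i, φ (v i) = w i) ∧ v i₀ = 1}, Unimodular v.1 :=
      fun v => (aux_unimod v.1).mpr ⟨i₀, by rw [v.2.2]; exact isUnit_one⟩
    set f : {v : Fin (d + 1) → O ⧸ Ideal.span {π ^ (m + 1)} // (∀ i, φ (v i) = w i) ∧ v i₀ = 1} →
        {y // ρ y = Quotient.mk (unimodSetoid (O ⧸ Ideal.span {π ^ m}) (d + 1)) ⟨w, hwu⟩} :=
      fun v => ⟨Quotient.mk _ ⟨v.1, hSuni v⟩, by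
        rw [hρmk]
        congr 1
        exact Subtype.ext (funext fun i => v.2.1 i)⟩ with hf
    have hfbij : Function.Bijective f := by
      constructor
      · intro v v' h
        have h' := congrArg Subtype.val h
        obtain ⟨u, hu⟩ := Quotient.exact h'
        have hu0 : (↑u : O ⧸ Ideal.span {π ^ (m + 1)}) = 1 := by
          have := hu i₀
          rw [v.2.2, v'.2.2, mul_one] at this
          exact this
        exact Subtype.ext (funext fun i => by rw [← hu i, hu0, one_mul])
      · rintro ⟨y, hy⟩
        obtain ⟨⟨v, hv⟩, rfl⟩ := Quotient.exists_rep y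
        rw [hρmk] at hy
        obtain ⟨u, hu⟩ := Quotient.exact hy
        have hu0 : (↑u : O ⧸ Ideal.span {π ^ m}) * φ (v i₀) = 1 := (hu i₀).trans hone
        have hunit : IsUnit (v i₀) := by
          obtain ⟨a, ha⟩ := Ideal.Quotient.mk_surjective (I := Ideal.span {π ^ (m + 1)}) (v i₀)
          have h1 : IsUnit (Ideal.Quotient.mk (Ideal.span {π ^ m}) a) := by
            refine IsUnit.of_mul_eq_one ↑u ?_
            rw [← hφ a, ha, mul_comm]
            exact hu0
          rw [← ha]
          exact (aux_isUnit_mk hπ (by omega) a).mpr ((aux_isUnit_mk hπ hm a).mp h1)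
        set t : (O ⧸ Ideal.span {π ^ (m + 1)})ˣ := hunit.unit with ht
        have htv : (↑t : O ⧸ Ideal.span {π ^ (m + 1)}) = v i₀ := hunit.unit_spec
        have hφt : φ (↑t⁻¹ : O ⧸ Ideal.span {π ^ (m + 1)}) = ↑u := by
          have h1 : φ (↑t⁻¹ : O ⧸ Ideal.span {π ^ (m + 1)}) * φ (↑t : O ⧸ Ideal.span {π ^ (m + 1)}) = 1 := by
            rw [← map_mul, Units.inv_mul, map_one]
          have h2 : (↑u : O ⧸ Ideal.span {π ^ m}) * φ (↑t : O ⧸ Ideal.span {π ^ (m + 1)}) = 1 := by rw [htv]; exact hu0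
          calc φ (↑t⁻¹ : O ⧸ Ideal.span {π ^ (m + 1)}) = φ (↑t⁻¹ : O ⧸ Ideal.span {π ^ (m + 1)}) * ((↑u : O ⧸ Ideal.span {π ^ m}) *
                φ (↑t : O ⧸ Ideal.span {π ^ (m + 1)})) := by rw [h2, mul_one]
            _ = (↑u : O ⧸ Ideal.span {π ^ m}) * (φ (↑t⁻¹ : O ⧸ Ideal.span {π ^ (m + 1)}) * φ (↑t : O ⧸ Ideal.span {π ^ (m + 1)})) := by ring
            _ = ↑u := by rw [h1, mul_one]
        refine ⟨⟨fun i => (↑t⁻¹ : O ⧸ Ideal.span {π ^ (m + 1)}) * v i, fun i => ?_, ?_⟩, ?_⟩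
        · show φ ((↑t⁻¹ : O ⧸ Ideal.span {π ^ (m + 1)}) * v i) = w i
          rw [map_mul, hφt]
          exact hu i
        · show (↑t⁻¹ : O ⧸ Ideal.span {π ^ (m + 1)}) * v i₀ = 1
          rw [← htv, Units.inv_mul]
        · refine Subtype.ext ?_
          show Quotient.mk _ _ = Quotient.mk _ (⟨v, hv⟩ :
            {v : Fin (d + 1) → O ⧸ Ideal.span {π ^ (m + 1)} // Unimodular v})
          refine Quotient.sound ⟨t, fun i => ?_⟩
          show (↑t : O ⧸ Ideal.span {π ^ (m + 1)}) * ((↑t⁻¹ : O ⧸ Ideal.span {π ^ (m + 1)}) * v i) = v i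
          rw [← mul_assoc, Units.mul_inv, one_mul]
    rw [← Nat.card_eq_of_bijective f hfbij]
    -- count normalized representatives
    have e2 : {v : Fin (d + 1) → O ⧸ Ideal.span {π ^ (m + 1)} // (∀ i, φ (v i) = w i) ∧ v i₀ = 1} ≃
        ∀ i : {i : Fin (d + 1) // i ≠ i₀}, {z : O ⧸ Ideal.span {π ^ (m + 1)} // φ z = w i.1} :=
      { toFun := fun v i => ⟨v.1 i.1, v.2.1 i.1⟩
        invFun := fun g => ⟨fun i => if h : i = i₀ then 1 else (g ⟨i, h⟩).1,
          ⟨fun i => by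
            by_cases h : i = i₀
            · subst h; simp only [dif_pos]; rw [map_one, hone]
            · simp only [dif_neg h]; exact (g ⟨i, h⟩).2, by simp⟩⟩
        left_inv := fun v => by
          refine Subtype.ext (funext fun i => ?_)
          show (if h : i = i₀ then 1 else v.1 i) = v.1 i
          by_cases h : i = i₀
          · subst h; rw [dif_pos rfl, v.2.2]
          · rw [dif_neg h]
        right_inv := fun g => by
          funext i
          refine Subtype.ext ?_
          show (if h : i.1 = i₀ then 1 else (g ⟨i.1, h⟩).1) = (g i).1
          rw [dif_neg i.2] }

    rw [Nat.card_congr e2, Nat.card_pi]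
    have hcard : ∀ i : {i : Fin (d + 1) // i ≠ i₀},
        Nat.card {z : O ⧸ Ideal.span {π ^ (m + 1)} // φ z = w i.1} = q := fun i => hkercard _
    rw [Finset.prod_congr rfl (fun i _ => hcard i), Finset.prod_const,
      Finset.card_univ]
    congr 1
    have : Fintype.card {i : Fin (d + 1) // ¬ i = i₀} = d := by
      rw [Fintype.card_subtype_compl, Fintype.card_subtype_eq, Fintype.card_fin]
      omega
    simpa using this
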